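/- arXiv:0705.2268 — 2 statements merged into one kernel-verified Lean document; each statement's English description precedes it below -/
import Mathlib

section
/- Every positive polynomial (a polynomial that is nonnegative and not identically zero) on ℝⁿ belongs to RH_∞. -/
open MeasureTheory Metric


open MeasureTheory Metric MvPolynomial Finset

namespace RHAux

variable {n : ℕ}

noncomputable def ev (Q : MvPolynomial (Fin n) ℝ) (x : EuclideanSpace ℝ (Fin n)) : ℝ :=
  MvPolynomial.eval (fun i => x i) Q

lemma continuous_ev (Q : MvPolynomial (Fin n) ℝ) : Continuous (ev Q) :=
  (MvPolynomial.continuous_eval (p := Q)).comp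
    (PiLp.continuousLinearEquiv 2 ℝ (fun _ : Fin n => ℝ)).continuous

lemma integrableOn_ev (Q : MvPolynomial (Fin n) ℝ) (c : EuclideanSpace ℝ (Fin n)) (r : ℝ) :
    IntegrableOn (ev Q) (ball c r) :=
  (((continuous_ev Q).continuousOn).integrableOn_compact (isCompact_closedBall c r)).mono_set
    ball_subset_closedBall

lemma abs_coord_le (x : EuclideanSpace ℝ (Fin n)) (i : Fin n) : |x i| ≤ ‖x‖ := by
  rw [EuclideanSpace.norm_eq]
  rw [show |x i| = Real.sqrt ((x i) ^ 2) from by rw [Real.sqrt_sq_eq_abs]]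
  apply Real.sqrt_le_sqrt
  simpa using Finset.single_le_sum (f := fun j => ‖x j‖ ^ 2) (fun j _ => sq_nonneg _)
    (Finset.mem_univ i)

lemma eq_zero_of_zero_on_ball (Q : MvPolynomial (Fin n) ℝ)
    (h : ∀ x ∈ ball (0 : EuclideanSpace ℝ (Fin n)) 1, ev Q x = 0) : Q = 0 := by
  have hA : AnalyticOnNhd ℝ
      (fun x : EuclideanSpace ℝ (Fin n) =>
        MvPolynomial.eval ((PiLp.continuousLinearEquiv 2 ℝ
          (fun _ : Fin n => ℝ)).toContinuousLinearMap x) Q) Set.univ :=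
    AnalyticOnNhd.eval_continuousLinearMap _ Q
  have hzero : (fun x : EuclideanSpace ℝ (Fin n) =>
      MvPolynomial.eval ((PiLp.continuousLinearEquiv 2 ℝ
        (fun _ : Fin n => ℝ)).toContinuousLinearMap x) Q) =ᶠ[nhds (0 : EuclideanSpace ℝ (Fin n))]
      0 := by
    filter_upwards [ball_mem_nhds (0 : EuclideanSpace ℝ (Fin n)) one_pos] with x hx
    exact h x hx
  have := hA.eqOn_zero_of_preconnected_of_eventuallyEq_zero isPreconnected_univ
    (Set.mem_univ (0 : EuclideanSpace ℝ (Fin n))) hzero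
  apply MvPolynomial.funext
  intro v
  have hv := this (Set.mem_univ
    ((PiLp.continuousLinearEquiv 2 ℝ (fun _ : Fin n => ℝ)).symm v))
  exact hv

lemma integral_abs_ev_pos (Q : MvPolynomial (Fin n) ℝ) (hQ : Q ≠ 0) :
    0 < ∫ x in ball (0 : EuclideanSpace ℝ (Fin n)) 1, |ev Q x| := by
  rw [setIntegral_pos_iff_support_of_nonneg_ae
    (Filter.Eventually.of_forall fun x => abs_nonneg _) ((integrableOn_ev Q 0 1).abs)]
  obtain ⟨x₀, hx₀b, hx₀⟩ : ∃ x ∈ ball (0 : EuclideanSpace ℝ (Fin n)) 1, ev Q x ≠ 0 := by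
    by_contra hcon
    push_neg at hcon
    exact hQ (eq_zero_of_zero_on_ball Q hcon)
  have hopen : IsOpen (Function.support (fun x => |ev Q x|) ∩
      ball (0 : EuclideanSpace ℝ (Fin n)) 1) := by
    have : Function.support (fun x => |ev Q x|) = (fun x => ev Q x) ⁻¹' {0}ᶜ := by
      ext y; simp [Function.mem_support, abs_ne_zero]
    rw [this]
    exact ((isOpen_compl_singleton.preimage (continuous_ev Q)).inter isOpen_ball)
  exact hopen.measure_pos volume ⟨x₀, by simp [Function.mem_support, abs_ne_zero, hx₀], hx₀b⟩


noncomputable def Tset (n d : ℕ) : Finset (Fin n →₀ ℕ) :=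
  Finset.Iic (Finsupp.equivFunOnFinite.symm fun _ => d)

lemma zero_mem_Tset (n d : ℕ) : 0 ∈ Tset n d := by
  simp [Tset]

lemma support_subset_Tset {d : ℕ} (Q : MvPolynomial (Fin n) ℝ) (h : Q.totalDegree ≤ d) :
    Q.support ⊆ Tset n d := by
  intro m hm
  simp only [Tset, Finset.mem_Iic]
  rw [Finsupp.le_def]
  intro i
  have h1 : m i ≤ m.sum fun _ e => e := by
    by_cases hi : i ∈ m.support
    · exact Finset.single_le_sum (f := fun j => m j) (fun j _ => Nat.zero_le _) hi
    · simp [Finsupp.notMem_support_iff.mp hi]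
  have h2 : m.sum (fun _ e => e) ≤ d := le_trans (le_totalDegree hm) h
  simpa using le_trans h1 h2

/-- coefficient space -/
abbrev W (n d : ℕ) := {m // m ∈ Tset n d} → ℝ

noncomputable def ψ {d : ℕ} (c : W n d) : MvPolynomial (Fin n) ℝ :=
  ∑ m ∈ (Tset n d).attach, monomial m.1 (c m)

lemma coeff_psi {d : ℕ} (c : W n d) (m : {m // m ∈ Tset n d}) :
    coeff m.1 (ψ c) = c m := by
  unfold ψ
  rw [MvPolynomial.coeff_sum]
  rw [Finset.sum_eq_single m]
  · simp [coeff_monomial]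
  · intro b _ hb
    rw [coeff_monomial, if_neg]
    exact fun hc => hb (Subtype.ext hc)
  · intro hm; exact absurd (Finset.mem_attach _ m) hm

lemma psi_coeff_eq {d : ℕ} (Q : MvPolynomial (Fin n) ℝ) (h : Q.support ⊆ Tset n d) :
    ψ (fun m : {m // m ∈ Tset n d} => coeff m.1 Q) = Q := by
  unfold ψ
  rw [Finset.sum_attach (Tset n d) (fun m => monomial m (coeff m Q))]
  rw [← Finset.sum_subset h (fun m _ hns => by
    rw [MvPolynomial.notMem_support_iff.mp hns, map_zero])]
  exact (MvPolynomial.as_sum Q).symm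

lemma ev_psi {d : ℕ} (c : W n d) (x : EuclideanSpace ℝ (Fin n)) :
    ev (ψ c) x = ∑ m ∈ (Tset n d).attach, c m * (m.1.prod fun i e => (x i) ^ e) := by
  unfold ev ψ
  rw [map_sum]
  exact Finset.sum_congr rfl fun m _ => by rw [eval_monomial]

lemma psi_sub {d : ℕ} (c c' : W n d) : ψ (c - c') = ψ c - ψ c' := by
  unfold ψ
  rw [← Finset.sum_sub_distrib]
  exact Finset.sum_congr rfl fun m _ => by rw [Pi.sub_apply, map_sub]

lemma ev_sub (Q Q' : MvPolynomial (Fin n) ℝ) (x : EuclideanSpace ℝ (Fin n)) :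
    ev (Q - Q') x = ev Q x - ev Q' x := by
  unfold ev; rw [map_sub]

lemma abs_ev_psi_le {d : ℕ} (c : W n d) (x : EuclideanSpace ℝ (Fin n)) (hx : ‖x‖ ≤ 1) :
    |ev (ψ c) x| ≤ (Tset n d).card * ‖c‖ := by
  have habs : ∀ i : Fin n, |x i| ≤ 1 := fun i => le_trans (abs_coord_le x i) hx
  rw [ev_psi]
  calc |∑ m ∈ (Tset n d).attach, c m * (m.1.prod fun i e => (x i) ^ e)|
      ≤ ∑ m ∈ (Tset n d).attach, |c m * (m.1.prod fun i e => (x i) ^ e)| :=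
        Finset.abs_sum_le_sum_abs _ _
    _ ≤ ∑ _m ∈ (Tset n d).attach, ‖c‖ := by
        apply Finset.sum_le_sum
        intro m _
        rw [abs_mul]
        have h1 : |c m| ≤ ‖c‖ := by
          simpa [Real.norm_eq_abs] using norm_le_pi_norm c m
        have h2 : |m.1.prod fun i e => (x i) ^ e| ≤ 1 := by
          rw [Finsupp.prod, Finset.abs_prod]
          apply Finset.prod_le_one
          · intro i _; positivity
          · intro i _
            rw [abs_pow]
            exact pow_le_one₀ (abs_nonneg _) (habs i)
        calc |c m| * |m.1.prod fun i e => (x i) ^ e| ≤ ‖c‖ * 1 :=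
              mul_le_mul h1 h2 (abs_nonneg _) (norm_nonneg _)
          _ = ‖c‖ := mul_one _
    _ = (Tset n d).card * ‖c‖ := by
        rw [Finset.sum_const, Finset.card_attach, nsmul_eq_mul]




variable {n : ℕ}

lemma psi_smul {d : ℕ} (t : ℝ) (c : W n d) (x : EuclideanSpace ℝ (Fin n)) :
    ev (ψ (t • c)) x = t * ev (ψ c) x := by
  rw [ev_psi, ev_psi, Finset.mul_sum]
  exact Finset.sum_congr rfl fun m _ => by rw [Pi.smul_apply, smul_eq_mul, mul_assoc]

lemma psi_ne_zero {d : ℕ} (c : W n d) (hc : c ≠ 0) : ψ c ≠ 0 := by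
  intro h
  apply hc
  funext m
  have := coeff_psi c m
  rw [h] at this
  simpa using this.symm

noncomputable def gfun (n d : ℕ) (c : W n d) : ℝ :=
  ∫ x in ball (0 : EuclideanSpace ℝ (Fin n)) 1, |ev (ψ c) x|

lemma gfun_continuous (n d : ℕ) : Continuous (gfun n d) := by
  set v : ℝ := (volume (ball (0 : EuclideanSpace ℝ (Fin n)) 1)).toReal with hv
  have hv0 : 0 ≤ v := ENNReal.toReal_nonneg
  have hK : (0:ℝ) ≤ v * (Tset n d).card := by positivity
  apply LipschitzWith.continuous (K := ⟨v * (Tset n d).card, hK⟩)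
  apply LipschitzWith.of_dist_le_mul
  intro c c'
  rw [Real.dist_eq, dist_eq_norm]
  have hint : ∀ c : W n d, IntegrableOn (fun x => |ev (ψ c) x|)
      (ball (0 : EuclideanSpace ℝ (Fin n)) 1) := fun c => (integrableOn_ev (ψ c) 0 1).abs
  have h1 : gfun n d c - gfun n d c' =
      ∫ x in ball (0 : EuclideanSpace ℝ (Fin n)) 1, (|ev (ψ c) x| - |ev (ψ c') x|) := by
    rw [integral_sub (hint c) (hint c')]; rfl
  rw [h1]
  have h2 : |∫ x in ball (0 : EuclideanSpace ℝ (Fin n)) 1, (|ev (ψ c) x| - |ev (ψ c') x|)| ≤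
      ∫ x in ball (0 : EuclideanSpace ℝ (Fin n)) 1, |ev (ψ (c - c')) x| := by
    rw [show ∀ r : ℝ, |r| = ‖r‖ from fun r => rfl]
    apply (norm_integral_le_integral_norm _).trans
    apply setIntegral_mono_on ((hint c).sub (hint c')).norm (hint (c - c')) measurableSet_ball
    intro x _
    rw [psi_sub, ev_sub]
    rw [Real.norm_eq_abs]
    exact abs_abs_sub_abs_le_abs_sub _ _
  apply h2.trans
  have h3 : ∫ x in ball (0 : EuclideanSpace ℝ (Fin n)) 1, |ev (ψ (c - c')) x| ≤
      ∫ _x in ball (0 : EuclideanSpace ℝ (Fin n)) 1, ((Tset n d).card * ‖c - c'‖) := by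
    apply setIntegral_mono_on (hint _) (integrableOn_const measure_ball_lt_top.ne)
      measurableSet_ball
    intro x hx
    exact abs_ev_psi_le (c - c') x (le_of_lt (by simpa using hx))
  apply h3.trans
  rw [setIntegral_const, smul_eq_mul, measureReal_def, ← hv]
  exact le_of_eq (show _ = (v * ((Tset n d).card : ℝ)) * ‖c - c'‖ by ring)


lemma gfun_smul {d : ℕ} (t : ℝ) (c : W n d) : gfun n d (t • c) = |t| * gfun n d c := by
  unfold gfun
  simp_rw [psi_smul, abs_mul]
  rw [integral_const_mul]

lemma exists_eps (n d : ℕ) : ∃ ε : ℝ, 0 < ε ∧ ∀ c : W n d, ε * ‖c‖ ≤ gfun n d c := by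
  haveI : Nonempty {m // m ∈ Tset n d} := ⟨⟨0, zero_mem_Tset n d⟩⟩
  have hne : (sphere (0 : W n d) 1).Nonempty := NormedSpace.sphere_nonempty.mpr zero_le_one
  obtain ⟨c₀, hc₀mem, hc₀min⟩ := (isCompact_sphere (0 : W n d) 1).exists_isMinOn hne
    (gfun_continuous n d).continuousOn
  have hc₀ : ‖c₀‖ = 1 := by simpa using hc₀mem
  have hεpos : 0 < gfun n d c₀ :=
    integral_abs_ev_pos _ (psi_ne_zero c₀ (by intro h; rw [h] at hc₀; simp at hc₀))
  refine ⟨gfun n d c₀, hεpos, ?_⟩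
  intro c
  rcases eq_or_ne c 0 with rfl | hc
  · rw [norm_zero, mul_zero]
    exact setIntegral_nonneg measurableSet_ball fun _ _ => abs_nonneg _
  · have hnorm : ‖c‖ ≠ 0 := norm_ne_zero_iff.mpr hc
    set u : W n d := ‖c‖⁻¹ • c with hu
    have humem : u ∈ sphere (0 : W n d) 1 := by
      simp [hu, norm_smul, abs_of_nonneg (inv_nonneg.mpr (norm_nonneg c)),
        inv_mul_cancel₀ hnorm]
    have hcu : c = ‖c‖ • u := by rw [hu, smul_smul, mul_inv_cancel₀ hnorm, one_smul]
    have h1 : gfun n d c = ‖c‖ * gfun n d u := by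
      conv_lhs => rw [hcu]
      rw [gfun_smul, abs_of_nonneg (norm_nonneg c)]
    calc gfun n d c₀ * ‖c‖ = ‖c‖ * gfun n d c₀ := mul_comm _ _
      _ ≤ ‖c‖ * gfun n d u :=
          mul_le_mul_of_nonneg_left (isMinOn_iff.mp hc₀min u humem) (norm_nonneg c)
      _ = gfun n d c := h1.symm

lemma key (n d : ℕ) : ∃ C : ℝ, 0 < C ∧ ∀ Q : MvPolynomial (Fin n) ℝ, Q.totalDegree ≤ d →
    ∀ x ∈ ball (0 : EuclideanSpace ℝ (Fin n)) 1,
      |ev Q x| ≤ C * ∫ y in ball (0 : EuclideanSpace ℝ (Fin n)) 1, |ev Q y| := by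
  obtain ⟨ε, hε, hεle⟩ := exists_eps n d
  have hcard : (0:ℝ) < (Tset n d).card := by
    exact_mod_cast Finset.card_pos.mpr ⟨0, zero_mem_Tset n d⟩
  refine ⟨(Tset n d).card / ε, div_pos hcard hε, ?_⟩
  intro Q hQ x hx
  set c : W n d := fun m => coeff m.1 Q with hcdef
  have hψ : ψ c = Q := psi_coeff_eq Q (support_subset_Tset Q hQ)
  have h1 : |ev Q x| ≤ (Tset n d).card * ‖c‖ := by
    rw [← hψ]
    exact abs_ev_psi_le c x (le_of_lt (by simpa using hx))
  have h2 : ε * ‖c‖ ≤ ∫ y in ball (0 : EuclideanSpace ℝ (Fin n)) 1, |ev Q y| := by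
    rw [← hψ]; exact hεle c
  calc |ev Q x| ≤ (Tset n d).card * ‖c‖ := h1
    _ = ((Tset n d).card / ε) * (ε * ‖c‖) := by field_simp
    _ ≤ ((Tset n d).card / ε) * ∫ y in ball (0 : EuclideanSpace ℝ (Fin n)) 1, |ev Q y| :=
        mul_le_mul_of_nonneg_left h2 (le_of_lt (div_pos hcard hε))

lemma totalDegree_comp_le (P : MvPolynomial (Fin n) ℝ) (c0 : Fin n → ℝ) (r : ℝ) :
    (aeval (fun i => MvPolynomial.C (c0 i) + MvPolynomial.C r * X i) P).totalDegree ≤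
      P.totalDegree := by
  rw [aeval_def, eval₂_eq]
  refine (totalDegree_finset_sum _ _).trans (Finset.sup_le fun m hm => ?_)
  have hbase : ∀ i : Fin n,
      (MvPolynomial.C (c0 i) + MvPolynomial.C r * X i).totalDegree ≤ 1 := by
    intro i
    refine (totalDegree_add _ _).trans (max_le ?_ ?_)
    · simp [totalDegree_C]
    · exact (totalDegree_mul _ _).trans (by simp [totalDegree_C, totalDegree_X])
  calc (algebraMap ℝ (MvPolynomial (Fin n) ℝ) (coeff m P) *
        ∏ i ∈ m.support, (MvPolynomial.C (c0 i) + MvPolynomial.C r * X i) ^ m i).totalDegree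
      ≤ (algebraMap ℝ (MvPolynomial (Fin n) ℝ) (coeff m P)).totalDegree +
        (∏ i ∈ m.support,
          (MvPolynomial.C (c0 i) + MvPolynomial.C r * X i) ^ m i).totalDegree :=
        totalDegree_mul _ _
    _ = (∏ i ∈ m.support,
          (MvPolynomial.C (c0 i) + MvPolynomial.C r * X i) ^ m i).totalDegree := by
        rw [MvPolynomial.algebraMap_eq, totalDegree_C, zero_add]
    _ ≤ ∑ i ∈ m.support,
          ((MvPolynomial.C (c0 i) + MvPolynomial.C r * X i) ^ m i).totalDegree :=
        totalDegree_finset_prod _ _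
    _ ≤ ∑ i ∈ m.support, m i := by
        refine Finset.sum_le_sum fun i _ => ?_
        refine (totalDegree_pow _ _).trans ?_
        calc m i * (MvPolynomial.C (c0 i) + MvPolynomial.C r * X i).totalDegree
            ≤ m i * 1 := Nat.mul_le_mul_left _ (hbase i)
          _ = m i := Nat.mul_one _
    _ ≤ P.totalDegree := le_totalDegree hm

lemma eval_eq_aeval (v : Fin n → ℝ) (q : MvPolynomial (Fin n) ℝ) :
    MvPolynomial.eval v q = aeval v q := by
  rw [aeval_def, Algebra.algebraMap_self]
  rfl

lemma ev_comp (P : MvPolynomial (Fin n) ℝ) (c0 : EuclideanSpace ℝ (Fin n)) (r : ℝ)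
    (x : EuclideanSpace ℝ (Fin n)) :
    ev (aeval (fun i => MvPolynomial.C (c0 i) + MvPolynomial.C r * X i) P) x =
      ev P (c0 + r • x) := by
  unfold ev
  rw [eval_eq_aeval, comp_aeval_apply, eval_eq_aeval]
  have hfun : (fun i => (aeval fun j => x j : MvPolynomial (Fin n) ℝ →ₐ[ℝ] ℝ)
      (MvPolynomial.C (c0 i) + MvPolynomial.C r * X i)) = fun i => (c0 + r • x) i := by
    funext i
    simp [PiLp.add_apply, PiLp.smul_apply, smul_eq_mul]
  rw [hfun]

lemma integral_comp_eq {r : ℝ} (hr : 0 < r) (P : MvPolynomial (Fin n) ℝ)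
    (c0 : EuclideanSpace ℝ (Fin n)) :
    ∫ x in ball (0 : EuclideanSpace ℝ (Fin n)) 1, ev P (c0 + r • x) =
      (r ^ n)⁻¹ * ∫ y in ball c0 r, ev P y := by
  have hs := Measure.setIntegral_comp_smul_of_pos (μ := (volume : Measure (EuclideanSpace ℝ (Fin n))))
    (fun y => ev P (c0 + y)) (ball (0 : EuclideanSpace ℝ (Fin n)) 1) hr
  rw [smul_unitBall_of_pos hr, finrank_euclideanSpace_fin] at hs
  rw [hs, smul_eq_mul]
  congr 1
  have hmp : MeasurePreserving (fun y : EuclideanSpace ℝ (Fin n) => c0 + y) volume volume :=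
    measurePreserving_add_left volume c0
  have hpre : (fun y : EuclideanSpace ℝ (Fin n) => c0 + y) ⁻¹' ball c0 r =
      ball (0 : EuclideanSpace ℝ (Fin n)) r := by
    ext y
    simp [mem_ball, dist_eq_norm, add_sub_cancel_left]
  have h := hmp.setIntegral_preimage_emb (measurableEmbedding_addLeft c0) (ev P) (ball c0 r)
  rw [hpre] at h
  exact h

lemma vol_ball_eq {r : ℝ} (hr : 0 < r) (c0 : EuclideanSpace ℝ (Fin n)) :
    (volume (ball c0 r)).toReal =
      r ^ n * (volume (ball (0 : EuclideanSpace ℝ (Fin n)) 1)).toReal := by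
  rw [Measure.addHaar_ball_of_pos volume c0 hr, finrank_euclideanSpace_fin,
    ENNReal.toReal_mul, ENNReal.toReal_ofReal (by positivity)]

end RHAux

open MvPolynomial in
theorem polynomial_rh_infty' {n : ℕ} (P : MvPolynomial (Fin n) ℝ)
    (hP0 : ∀ x : EuclideanSpace ℝ (Fin n), 0 ≤ MvPolynomial.eval (fun i => x i) P)
    (hPne : P ≠ 0) :
    ∃ C : ℝ, 0 < C ∧ ∀ (c : EuclideanSpace ℝ (Fin n)) (r : ℝ), 0 < r →
      ∀ᵐ x ∂(volume.restrict (ball c r)),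
        MvPolynomial.eval (fun i => x i) P ≤
          C * ⨍ y in ball c r, MvPolynomial.eval (fun i => y i) P := by
  classical
  obtain ⟨C₀, hC₀, hkey⟩ := RHAux.key n P.totalDegree
  have hvpos : 0 < (volume (ball (0 : EuclideanSpace ℝ (Fin n)) 1)).toReal :=
    ENNReal.toReal_pos (measure_ball_pos volume _ one_pos).ne' measure_ball_lt_top.ne
  set v := (volume (ball (0 : EuclideanSpace ℝ (Fin n)) 1)).toReal with hvdef
  refine ⟨C₀ * v, mul_pos hC₀ hvpos, ?_⟩
  intro c0 r hr
  apply ae_restrict_of_forall_mem measurableSet_ball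
  intro y hy
  set Q := aeval (fun i => MvPolynomial.C (c0 i) + MvPolynomial.C r * MvPolynomial.X i) P
    with hQdef
  have hdeg : Q.totalDegree ≤ P.totalDegree := RHAux.totalDegree_comp_le P (fun i => c0 i) r
  have hQev : ∀ x, RHAux.ev Q x = RHAux.ev P (c0 + r • x) := RHAux.ev_comp P c0 r
  have hQnn : ∀ x, 0 ≤ RHAux.ev Q x := fun x => by rw [hQev]; exact hP0 _
  set x : EuclideanSpace ℝ (Fin n) := r⁻¹ • (y - c0) with hxdef
  have hyx : c0 + r • x = y := by
    rw [hxdef, smul_smul, mul_inv_cancel₀ hr.ne', one_smul, add_sub_cancel]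
  have hxball : x ∈ ball (0 : EuclideanSpace ℝ (Fin n)) 1 := by
    rw [mem_ball_zero_iff, hxdef, norm_smul, norm_inv, Real.norm_of_nonneg hr.le]
    have hlt : ‖y - c0‖ < r := by rwa [← dist_eq_norm, ← mem_ball]
    calc r⁻¹ * ‖y - c0‖ < r⁻¹ * r := by
          exact mul_lt_mul_of_pos_left hlt (inv_pos.mpr hr)
      _ = 1 := inv_mul_cancel₀ hr.ne'
  have hIQ : ∫ z in ball (0 : EuclideanSpace ℝ (Fin n)) 1, RHAux.ev Q z =
      (r ^ n)⁻¹ * ∫ y' in ball c0 r, RHAux.ev P y' := by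
    simp_rw [hQev]
    exact RHAux.integral_comp_eq hr P c0
  have havg : ⨍ y' in ball c0 r, RHAux.ev P y' =
      v⁻¹ * ∫ z in ball (0 : EuclideanSpace ℝ (Fin n)) 1, RHAux.ev Q z := by
    rw [setAverage_eq, measureReal_def, RHAux.vol_ball_eq hr c0, hIQ, smul_eq_mul, ← hvdef, mul_inv]
    have hrn : (r:ℝ) ^ n ≠ 0 := (pow_pos hr n).ne'
    field_simp
  have h4 : ∫ z in ball (0 : EuclideanSpace ℝ (Fin n)) 1, RHAux.ev Q z =
      v * ⨍ y' in ball c0 r, RHAux.ev P y' := by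
    rw [havg, ← mul_assoc, mul_inv_cancel₀ hvpos.ne', one_mul]
  have h3 : ∫ z in ball (0 : EuclideanSpace ℝ (Fin n)) 1, |RHAux.ev Q z| =
      ∫ z in ball (0 : EuclideanSpace ℝ (Fin n)) 1, RHAux.ev Q z :=
    setIntegral_congr_fun measurableSet_ball fun z _ => abs_of_nonneg (hQnn z)
  show MvPolynomial.eval (fun i => y i) P ≤ (C₀ * v) * ⨍ y' in ball c0 r, RHAux.ev P y'
  calc MvPolynomial.eval (fun i => y i) P = RHAux.ev Q x := by
        rw [hQev, hyx]; rfl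
    _ ≤ |RHAux.ev Q x| := le_abs_self _
    _ ≤ C₀ * ∫ z in ball (0 : EuclideanSpace ℝ (Fin n)) 1, |RHAux.ev Q z| := hkey Q hdeg x hxball
    _ = C₀ * ∫ z in ball (0 : EuclideanSpace ℝ (Fin n)) 1, RHAux.ev Q z := by rw [h3]
    _ = C₀ * (v * ⨍ y' in ball c0 r, RHAux.ev P y') := by rw [h4]
    _ = (C₀ * v) * ⨍ y' in ball c0 r, RHAux.ev P y' := (mul_assoc _ _ _).symm


/-- Every positive polynomial (nonnegative and not identically zero) on `ℝⁿ`
belongs to `RH_∞`. -/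
theorem polynomial_rh_infty {n : ℕ} (P : MvPolynomial (Fin n) ℝ)
    (hP0 : ∀ x : EuclideanSpace ℝ (Fin n), 0 ≤ MvPolynomial.eval (fun i => x i) P)
    (hPne : P ≠ 0) :
    ∃ C : ℝ, 0 < C ∧ ∀ (c : EuclideanSpace ℝ (Fin n)) (r : ℝ), 0 < r →
      ∀ᵐ x ∂(volume.restrict (ball c r)),
        MvPolynomial.eval (fun i => x i) P ≤
          C * ⨍ y in ball c r, MvPolynomial.eval (fun i => y i) P := by
  exact polynomial_rh_infty' P hP0 hPne
end

section
/- Rearrangement–maximal function comparison: On a doubling metric measure space, the decreasing rearrangement (Mf)* of the uncentered Hardy–Littlewood maximal function satisfies (Mf)*(t) ≤ C f**(t) for all t > 0, where f**(t) = t^{-1}∫₀^t f*(s) ds, with C depending only on the doubling constant. -/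
open MeasureTheory Metric ENNReal NNReal

/-- Decreasing rearrangement of an `ℝ≥0∞`-valued function with respect to `μ`. -/
noncomputable def rearrE {X : Type*} [MeasurableSpace X] (μ : Measure X)
    (h : X → ℝ≥0∞) (t : ℝ) : ℝ≥0∞ :=
  sInf {l : ℝ≥0∞ | μ {x | l < h x} ≤ ENNReal.ofReal t}

section Aux

variable {X : Type*} [MeasurableSpace X] {μ : Measure X} {h : X → ℝ≥0∞} {t : ℝ}

lemma rearrE_le {l : ℝ≥0∞} (H : μ {x | l < h x} ≤ ENNReal.ofReal t) : rearrE μ h t ≤ l :=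
  sInf_le H

lemma meas_le_of_lt_rearrE {l : ℝ≥0∞} (H : rearrE μ h t < l) :
    μ {x | l < h x} ≤ ENNReal.ofReal t := by
  obtain ⟨a, haS, hal⟩ := sInf_lt_iff.mp H
  exact le_trans (measure_mono fun x hx => lt_trans hal hx) haS

lemma meas_le_of_rearrE_le {c : ℝ≥0∞} (hc : rearrE μ h t ≤ c) (hc' : c ≠ ∞) :
    μ {x | c < h x} ≤ ENNReal.ofReal t := by
  have hset : {x | c < h x} = ⋃ n : ℕ, {x | c + ((n : ℝ≥0∞))⁻¹ < h x} := by
    ext x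
    simp only [Set.mem_setOf_eq, Set.mem_iUnion]
    constructor
    · intro hx
      rcases eq_or_ne (h x) ∞ with hxt | hxt
      · refine ⟨1, ?_⟩
        rw [hxt]
        exact ENNReal.add_lt_top.mpr ⟨hc'.lt_top, by norm_num⟩
      · obtain ⟨n, hn⟩ := ENNReal.exists_inv_nat_lt (a := h x - c)
          (by simpa [tsub_eq_zero_iff_le] using not_le.mpr hx)
        refine ⟨n, ?_⟩
        calc c + ((n : ℝ≥0∞))⁻¹ < c + (h x - c) := by
              exact ENNReal.add_lt_add_left hc' hn
          _ = h x := add_tsub_cancel_of_le hx.le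
    · rintro ⟨n, hn⟩
      exact lt_of_le_of_lt le_self_add hn
  have hmono : Monotone (fun n : ℕ => {x | c + ((n : ℝ≥0∞))⁻¹ < h x}) := by
    intro n m hnm
    intro x hx
    refine lt_of_le_of_lt (add_le_add_right ?_ c) hx
    exact ENNReal.inv_le_inv.mpr (by exact_mod_cast hnm)
  rw [hset, Directed.measure_iUnion hmono.directed_le]
  refine iSup_le fun n => meas_le_of_lt_rearrE ?_
  refine lt_of_le_of_lt hc (ENNReal.lt_add_right hc' ?_)
  exact ENNReal.inv_ne_zero.mpr (ENNReal.natCast_ne_top n)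

lemma rearrE_anti (μ : Measure X) (h : X → ℝ≥0∞) : Antitone (rearrE μ h) := by
  intro s t hst
  exact sInf_le_sInf fun l hl => le_trans hl (ENNReal.ofReal_le_ofReal hst)

end Aux

lemma layercakeE {ν : Measure ℝ} [SFinite ν] {F : ℝ → ℝ≥0∞} (hF : Measurable F) :
    ∫⁻ s, F s ∂ν = ∫⁻ l in Set.Ioi (0:ℝ), ν {s | ENNReal.ofReal l < F s} := by
  have key : ∀ a : ℝ≥0∞,
      (∫⁻ l in Set.Ioi (0:ℝ), ({l' : ℝ | ENNReal.ofReal l' < a}.indicator 1 l)) = a := by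
    intro a
    have hms : MeasurableSet {l : ℝ | ENNReal.ofReal l < a} :=
      measurableSet_lt ENNReal.measurable_ofReal measurable_const
    rw [lintegral_indicator_one hms, Measure.restrict_apply' measurableSet_Ioi]
    rcases eq_or_ne a ∞ with rfl | ha
    · have : {l : ℝ | ENNReal.ofReal l < ∞} = Set.univ :=
        Set.eq_univ_of_forall fun l => ofReal_lt_top
      rw [this, Set.univ_inter, Real.volume_Ioi]
    · have : {l : ℝ | ENNReal.ofReal l < a} ∩ Set.Ioi 0 = Set.Ioo 0 a.toReal := by
        ext l
        simp only [Set.mem_inter_iff, Set.mem_setOf_eq, Set.mem_Ioi, Set.mem_Ioo]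
        constructor
        · rintro ⟨h1, h2⟩; exact ⟨h2, (ENNReal.ofReal_lt_iff_lt_toReal h2.le ha).mp h1⟩
        · rintro ⟨h1, h2⟩; exact ⟨(ENNReal.ofReal_lt_iff_lt_toReal h1.le ha).mpr h2, h1⟩
      rw [this, Real.volume_Ioo, sub_zero, ENNReal.ofReal_toReal ha]
  have hmble : Measurable (Function.uncurry fun (s l : ℝ) =>
      ({l' : ℝ | ENNReal.ofReal l' < F s}.indicator (1 : ℝ → ℝ≥0∞) l)) := by
    have heq : (Function.uncurry fun (s l : ℝ) =>
        ({l' : ℝ | ENNReal.ofReal l' < F s}.indicator (1 : ℝ → ℝ≥0∞) l))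
        = Set.indicator {p : ℝ × ℝ | ENNReal.ofReal p.2 < F p.1} 1 := by
      funext p
      by_cases hp : ENNReal.ofReal p.2 < F p.1 <;>
        simp [Function.uncurry, Set.indicator_apply, hp]
    rw [heq]
    exact measurable_const.indicator
      (measurableSet_lt (ENNReal.measurable_ofReal.comp measurable_snd) (hF.comp measurable_fst))
  calc ∫⁻ s, F s ∂ν
      = ∫⁻ s, (∫⁻ l in Set.Ioi (0:ℝ),
          ({l' : ℝ | ENNReal.ofReal l' < F s}.indicator 1 l)) ∂ν :=
        lintegral_congr fun s => (key (F s)).symm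
    _ = ∫⁻ l in Set.Ioi (0:ℝ), (∫⁻ s,
          ({l' : ℝ | ENNReal.ofReal l' < F s}.indicator 1 l) ∂ν) :=
        lintegral_lintegral_swap hmble.aemeasurable
    _ = ∫⁻ l in Set.Ioi (0:ℝ), ν {s | ENNReal.ofReal l < F s} := by
      refine lintegral_congr fun l => ?_
      have heq : (fun s => ({l' : ℝ | ENNReal.ofReal l' < F s}.indicator (1 : ℝ → ℝ≥0∞) l))
          = Set.indicator {s : ℝ | ENNReal.ofReal l < F s} 1 := by
        funext s
        by_cases hs : ENNReal.ofReal l < F s <;> simp [Set.indicator_apply, hs]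
      rw [heq, lintegral_indicator_one (measurableSet_lt measurable_const hF)]


lemma weak11 {X : Type*} [MetricSpace X] [MeasurableSpace X] [BorelSpace X] (μ : Measure X)
    (K : ℝ≥0∞) (hdoub8 : ∀ (c : X) (r : ℝ), 0 < r → μ (ball c (8 * r)) ≤ K * μ (ball c r))
    (h : X → ℝ≥0∞) (hm : Measurable h) (hJ : ∫⁻ x, h x ∂μ ≠ ∞)
    {lvl : ℝ≥0∞} (hlvl0 : lvl ≠ 0) (hlvlT : lvl ≠ ∞) :
    μ {x | lvl < ⨆ (c : X) (r : ℝ) (_ : x ∈ ball c r),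
        (μ (ball c r))⁻¹ * ∫⁻ y in ball c r, h y ∂μ}
      ≤ K * lvl⁻¹ * ∫⁻ x, h x ∂μ := by
  classical
  set J := ∫⁻ x, h x ∂μ with hJdef
  set En : ℕ → Set X := fun n => {x | ∃ p : X × ℝ, (0 < p.2 ∧ p.2 ≤ (n:ℝ) + 1 ∧
      lvl < (μ (ball p.1 p.2))⁻¹ * ∫⁻ y in ball p.1 p.2, h y ∂μ) ∧ x ∈ ball p.1 p.2} with hEn
  have hEsub : {x | lvl < ⨆ (c : X) (r : ℝ) (_ : x ∈ ball c r),
      (μ (ball c r))⁻¹ * ∫⁻ y in ball c r, h y ∂μ} ⊆ ⋃ n, En n := by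
    intro x hx
    simp only [Set.mem_setOf_eq, lt_iSup_iff] at hx
    obtain ⟨c, r, hxb, hlt⟩ := hx
    obtain ⟨n, hn⟩ := exists_nat_ge r
    have hr : 0 < r := lt_of_le_of_lt dist_nonneg (mem_ball.mp hxb)
    exact Set.mem_iUnion.mpr ⟨n, ⟨(c, r), ⟨hr, hn.trans (by linarith), hlt⟩, hxb⟩⟩
  have hmono : Monotone En := by
    intro n m hnm x hx
    obtain ⟨p, ⟨h1, h2, h3⟩, h4⟩ := hx
    have : (n:ℝ) + 1 ≤ (m:ℝ) + 1 := by
      have := Nat.cast_le (α := ℝ).mpr hnm; linarith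
    exact ⟨p, ⟨h1, h2.trans this, h3⟩, h4⟩
  refine le_trans (measure_mono hEsub) ?_
  rw [Directed.measure_iUnion hmono.directed_le]
  refine iSup_le fun n => ?_
  set T : Set (X × ℝ) := {p | 0 < p.2 ∧ p.2 ≤ (n:ℝ) + 1 ∧
      lvl < (μ (ball p.1 p.2))⁻¹ * ∫⁻ y in ball p.1 p.2, h y ∂μ} with hT
  obtain ⟨u, huT, hdisj, hcov⟩ :=
    Vitali.exists_disjoint_subfamily_covering_enlargement_closedBall T Prod.fst Prod.snd
      ((n:ℝ)+1) (fun p hp => hp.2.1) 4 (by norm_num)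
  have hfacts : ∀ p ∈ T, μ (ball p.1 p.2) ≠ 0 ∧ μ (ball p.1 p.2) ≠ ∞ ∧
      lvl * μ (ball p.1 p.2) ≤ ∫⁻ y in ball p.1 p.2, h y ∂μ := by
    intro p hp
    obtain ⟨hr, -, hlt⟩ := hp
    have h0 : μ (ball p.1 p.2) ≠ 0 := by
      intro h0
      have hz : ∫⁻ y in ball p.1 p.2, h y ∂μ = 0 := by
        rw [Measure.restrict_eq_zero.mpr h0, lintegral_zero_measure]
      rw [hz, mul_zero] at hlt
      simp at hlt
    have hT' : μ (ball p.1 p.2) ≠ ∞ := by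
      intro hT'
      rw [hT', ENNReal.inv_top, zero_mul] at hlt
      simp at hlt
    refine ⟨h0, hT', ?_⟩
    calc lvl * μ (ball p.1 p.2)
        ≤ ((μ (ball p.1 p.2))⁻¹ * ∫⁻ y in ball p.1 p.2, h y ∂μ) * μ (ball p.1 p.2) :=
          mul_le_mul_left hlt.le _
      _ = ∫⁻ y in ball p.1 p.2, h y ∂μ := by
          rw [mul_comm, ← mul_assoc, ENNReal.mul_inv_cancel h0 hT', one_mul]
  have htsum : ∀ F : Finset (X × ℝ), ↑F ⊆ u →
      ∑ p ∈ F, ∫⁻ y in ball p.1 p.2, h y ∂μ ≤ J := by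
    intro F hF
    have hpd : Set.PairwiseDisjoint (↑F) (fun p : X × ℝ => ball p.1 p.2) := by
      intro a ha b hb hab
      exact (hdisj (hF ha) (hF hb) hab).mono ball_subset_closedBall ball_subset_closedBall
    rw [← lintegral_biUnion_finset hpd (fun p _ => measurableSet_ball) h]
    exact lintegral_mono' Measure.restrict_le_self le_rfl
  have hw : ∑' p : X × ℝ,
      Set.indicator u (fun p : X × ℝ => ∫⁻ y in ball p.1 p.2, h y ∂μ) p ≤ J := by
    rw [ENNReal.tsum_eq_iSup_sum]
    refine iSup_le fun F => ?_
    have : ∑ p ∈ F, Set.indicator u (fun p : X × ℝ => ∫⁻ y in ball p.1 p.2, h y ∂μ) p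
        = ∑ p ∈ F.filter (· ∈ u), ∫⁻ y in ball p.1 p.2, h y ∂μ := by
      rw [Finset.sum_filter]
      exact Finset.sum_congr rfl fun p _ => Set.indicator_apply _ _ _
    rw [this]
    refine htsum _ ?_
    intro p hp
    exact (Finset.mem_filter.mp hp).2
  have hpos : ∀ p ∈ u, (0:ℝ≥0∞) < ∫⁻ y in ball p.1 p.2, h y ∂μ := by
    intro p hp
    obtain ⟨h0, hT', hle⟩ := hfacts p (huT hp)
    exact lt_of_lt_of_le (ENNReal.mul_pos hlvl0 h0) hle
  have hcnt : u.Countable := by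
    have hsupp := Summable.countable_support_ennreal (ne_top_of_le_ne_top hJ hw)
    refine Set.Countable.mono ?_ hsupp
    intro p hp
    simp only [Function.mem_support]
    rw [Set.indicator_of_mem hp]
    exact (hpos p hp).ne'
  have hcover : En n ⊆ ⋃ p ∈ u, ball p.1 (8 * p.2) := by
    intro x hx
    obtain ⟨a, haT, hxa⟩ := hx
    obtain ⟨b, hbu, hsub⟩ := hcov a haT
    have hb2 : 0 < b.2 := (huT hbu).1
    refine Set.mem_biUnion hbu ?_
    have hx4 : x ∈ closedBall b.1 (4 * b.2) := hsub (ball_subset_closedBall hxa)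
    exact closedBall_subset_ball (by linarith) hx4
  calc μ (En n) ≤ μ (⋃ p ∈ u, ball p.1 (8 * p.2)) := measure_mono hcover
    _ ≤ ∑' p : u, μ (ball (p:X×ℝ).1 (8 * (p:X×ℝ).2)) := measure_biUnion_le μ hcnt _
    _ ≤ ∑' p : u, K * lvl⁻¹ * ∫⁻ y in ball (p:X×ℝ).1 (p:X×ℝ).2, h y ∂μ := by
        refine ENNReal.tsum_le_tsum fun p => ?_
        obtain ⟨h0, hT', hle⟩ := hfacts p (huT p.2)
        refine le_trans (hdoub8 _ _ (huT p.2).1) ?_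
        rw [mul_assoc]
        refine mul_le_mul_right ?_ K
        calc μ (ball (p:X×ℝ).1 (p:X×ℝ).2)
            = lvl⁻¹ * (lvl * μ (ball (p:X×ℝ).1 (p:X×ℝ).2)) := by
              rw [← mul_assoc, ENNReal.inv_mul_cancel hlvl0 hlvlT, one_mul]
          _ ≤ lvl⁻¹ * ∫⁻ y in ball (p:X×ℝ).1 (p:X×ℝ).2, h y ∂μ := mul_le_mul_right hle _
    _ = K * lvl⁻¹ * ∑' p : u, ∫⁻ y in ball (p:X×ℝ).1 (p:X×ℝ).2, h y ∂μ :=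
        ENNReal.tsum_mul_left
    _ ≤ K * lvl⁻¹ * J := by
        refine mul_le_mul_right ?_ _
        exact le_trans (le_of_eq (tsum_subtype u
          (fun p : X × ℝ => ∫⁻ y in ball p.1 p.2, h y ∂μ))) hw


/-- The uncentered Hardy–Littlewood maximal function, with values in `ℝ≥0∞`. -/
noncomputable def maximalFn {X : Type*} [MetricSpace X] [MeasurableSpace X]
    (μ : Measure X) (f : X → ℝ) (x : X) : ℝ≥0∞ :=
  ⨆ (c : X) (r : ℝ) (_ : x ∈ ball c r),
    (μ (ball c r))⁻¹ * ∫⁻ y in ball c r, ‖f y‖₊ ∂μ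

/-- Rearrangement–maximal function comparison on a doubling metric measure space:
`(Mf)*(t) ≤ C f**(t)` for all `t > 0`, where `f**(t) = t⁻¹ ∫₀^t f*(s) ds`, with `C`
depending only on the doubling constant. -/
theorem rearrangement_maximal {X : Type*} [MetricSpace X] [MeasurableSpace X]
    [BorelSpace X] (μ : Measure X)
    (Cd : ℝ≥0) (hdoub : ∀ (x : X) (r : ℝ), 0 < r → μ (ball x (2 * r)) ≤ Cd * μ (ball x r)) :
    ∃ C : ℝ, 0 < C ∧ ∀ f : X → ℝ, Measurable f → ∀ t : ℝ, 0 < t →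
      rearrE μ (maximalFn μ f) t ≤
        ENNReal.ofReal C * (ENNReal.ofReal t)⁻¹ *
          ∫⁻ s in Set.Ioo 0 t, rearrE μ (fun x => (‖f x‖₊ : ℝ≥0∞)) s := by
  classical
  set M : ℝ≥0∞ := ((max Cd 1 : ℝ≥0) : ℝ≥0∞) with hM
  set K : ℝ≥0∞ := M ^ 3 with hK
  have hM1 : 1 ≤ M := by
    rw [hM]; exact_mod_cast le_max_right Cd 1
  have hM0 : M ≠ 0 := fun h => by simp [h] at hM1
  have hMtop : M ≠ ∞ := ENNReal.coe_ne_top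
  have hK0 : K ≠ 0 := pow_ne_zero 3 hM0
  have hKtop : K ≠ ∞ := ENNReal.pow_ne_top hMtop
  have hstep : ∀ (c : X) (r : ℝ), 0 < r → μ (ball c (2 * r)) ≤ M * μ (ball c r) := by
    intro c r hr
    refine le_trans (hdoub c r hr) (mul_le_mul_left ?_ _)
    rw [hM]
    exact_mod_cast le_max_left Cd 1
  have hdoub8 : ∀ (c : X) (r : ℝ), 0 < r → μ (ball c (8 * r)) ≤ K * μ (ball c r) := by
    intro c r hr
    have e1 : (8:ℝ) * r = 2 * (4 * r) := by ring
    have e2 : (4:ℝ) * r = 2 * (2 * r) := by ring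
    calc μ (ball c (8 * r)) = μ (ball c (2 * (4 * r))) := by rw [e1]
      _ ≤ M * μ (ball c (4 * r)) := hstep c _ (by linarith)
      _ = M * μ (ball c (2 * (2 * r))) := by rw [e2]
      _ ≤ M * (M * μ (ball c (2 * r))) := mul_le_mul_right (hstep c _ (by linarith)) _
      _ ≤ M * (M * (M * μ (ball c r))) :=
          mul_le_mul_right (mul_le_mul_right (hstep c _ hr) _) _
      _ = K * μ (ball c r) := by rw [hK]; ring
  refine ⟨1 + 2 * ((max Cd 1 : ℝ≥0) : ℝ) ^ 3, by positivity, ?_⟩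
  intro f hf t ht
  have hCid : ENNReal.ofReal (1 + 2 * ((max Cd 1 : ℝ≥0) : ℝ) ^ 3) = 1 + 2 * K := by
    rw [ENNReal.ofReal_add (by norm_num) (by positivity), ENNReal.ofReal_one,
      ENNReal.ofReal_mul (by norm_num), ENNReal.ofReal_pow (by positivity),
      ENNReal.ofReal_coe_nnreal]
    norm_num [hK, hM]
  set g : X → ℝ≥0∞ := fun x => (‖f x‖₊ : ℝ≥0∞) with hg
  have hgm : Measurable g := hf.nnnorm.coe_nnreal_ennreal
  set T : ℝ≥0∞ := ENNReal.ofReal t with hTdef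
  have hT0 : T ≠ 0 := by
    rw [hTdef]; simpa [ENNReal.ofReal_eq_zero] using ht
  have hTtop : T ≠ ∞ := ENNReal.ofReal_ne_top
  set I := ∫⁻ s in Set.Ioo 0 t, rearrE μ g s with hI
  rcases eq_or_ne I ∞ with hItop | hItop
  · have : ENNReal.ofReal (1 + 2 * ((max Cd 1 : ℝ≥0) : ℝ) ^ 3) * T⁻¹ * I = ∞ := by
      rw [hItop, ENNReal.mul_top]
      apply mul_ne_zero
      · rw [hCid]; simp
      · exact ENNReal.inv_ne_zero.mpr hTtop
    rw [this]; exact le_top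
  set lam := rearrE μ g t with hlam
  have hanti := rearrE_anti μ g
  have hmeas_re : Measurable (rearrE μ g) := hanti.measurable
  have hlamT : lam * T ≤ I := by
    calc lam * T = ∫⁻ _ in Set.Ioo 0 t, lam ∂volume := by
          rw [setLIntegral_const, Real.volume_Ioo, sub_zero, hTdef]
      _ ≤ I := by
          rw [hI]
          refine setLIntegral_mono' measurableSet_Ioo fun s hs => ?_
          exact hanti hs.2.le
  have hlamle : lam ≤ I * T⁻¹ := by
    calc lam = lam * T * T⁻¹ := by
          rw [mul_assoc, ENNReal.mul_inv_cancel hT0 hTtop, mul_one]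
      _ ≤ I * T⁻¹ := mul_le_mul_left hlamT _
  have hlamtop : lam ≠ ∞ :=
    ne_top_of_le_ne_top (ENNReal.mul_ne_top hItop (ENNReal.inv_ne_top.mpr hT0)) hlamle
  set h1 : X → ℝ≥0∞ := fun x => if lam < g x then g x else 0 with hh1
  have hh1m : Measurable h1 :=
    Measurable.ite (measurableSet_lt measurable_const hgm) hgm measurable_const
  set J := ∫⁻ x, h1 x ∂μ with hJ
  have hJle : J ≤ I := by
    set u : X → ℝ := fun x => if lam < g x then ‖f x‖ else 0 with hu
    have hum : Measurable u :=
      Measurable.ite (measurableSet_lt measurable_const hgm) hf.norm measurable_const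
    have hJeq : J = ∫⁻ l in Set.Ioi (0:ℝ), μ {a | l < u a} := by
      rw [hJ, ← lintegral_eq_lintegral_meas_lt μ
        (Filter.Eventually.of_forall fun x => by
          rw [hu]; dsimp only; split <;> [exact norm_nonneg _; exact le_refl 0])
        hum.aemeasurable]
      refine lintegral_congr fun x => ?_
      by_cases hx : lam < g x
      · simp only [hh1, hu, hx, if_true]
        exact (ofReal_norm (f x)).symm
      · simp [hh1, hu, hx]
    have hIeq : I = ∫⁻ l in Set.Ioi (0:ℝ),
        (volume.restrict (Set.Ioo 0 t)) {s | ENNReal.ofReal l < rearrE μ g s} :=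
      layercakeE hmeas_re
    rw [hJeq, hIeq]
    refine lintegral_mono_ae ?_
    rw [ae_restrict_iff' measurableSet_Ioi]
    refine Filter.Eventually.of_forall fun l hl => ?_
    replace hl : 0 < l := hl
    set d := μ {a | ENNReal.ofReal l < g a} with hd
    have hsub1 : {a | l < u a} ⊆ {a | ENNReal.ofReal l < g a} := by
      intro a ha
      simp only [Set.mem_setOf_eq] at ha ⊢
      by_cases hc : lam < g a
      · have hla : l < ‖f a‖ := by simpa [hu, hc] using ha
        calc ENNReal.ofReal l < ENNReal.ofReal ‖f a‖ :=
              (ENNReal.ofReal_lt_ofReal_iff_of_nonneg hl.le).mpr hla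
          _ = g a := ofReal_norm (f a)
      · exfalso
        have : l < 0 := by simpa [hu, hc] using ha
        linarith
    have hsub2 : {a | l < u a} ⊆ {a | lam < g a} := by
      intro a ha
      simp only [Set.mem_setOf_eq] at ha ⊢
      by_cases hc : lam < g a
      · exact hc
      · exfalso
        have : l < 0 := by simpa [hu, hc] using ha
        linarith
    have hmeas1 : μ {a | l < u a} ≤ d := measure_mono hsub1
    have hmeas2 : μ {a | l < u a} ≤ T :=
      le_trans (measure_mono hsub2) (meas_le_of_rearrE_le le_rfl hlamtop)
    set r := min d T with hr
    have hrT : r ≠ ∞ := ne_top_of_le_ne_top hTtop (min_le_right _ _)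
    have hrt : r.toReal ≤ t := by
      have h1' : r ≤ ENNReal.ofReal t := min_le_right _ _
      exact ENNReal.toReal_le_of_le_ofReal ht.le h1'
    have hrsub : Set.Ioo 0 r.toReal ⊆
        {s | ENNReal.ofReal l < rearrE μ g s} ∩ Set.Ioo 0 t := by
      intro s hs
      have hst : s < t := lt_of_lt_of_le hs.2 hrt
      have hsd : ENNReal.ofReal s < d := by
        have h1' : ENNReal.ofReal s < r := by
          rw [← ENNReal.ofReal_toReal hrT]
          exact (ENNReal.ofReal_lt_ofReal_iff_of_nonneg hs.1.le).mpr hs.2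
        exact lt_of_lt_of_le h1' (min_le_left _ _)
      constructor
      · by_contra hcon
        rw [Set.mem_setOf_eq, not_lt] at hcon
        have := meas_le_of_rearrE_le hcon ENNReal.ofReal_ne_top
        rw [← hd] at this
        exact absurd this (not_le.mpr hsd)
      · exact ⟨hs.1, hst⟩
    have hfin : r ≤ (volume.restrict (Set.Ioo 0 t)) {s | ENNReal.ofReal l < rearrE μ g s} := by
      rw [Measure.restrict_apply' measurableSet_Ioo]
      refine le_trans ?_ (measure_mono hrsub)
      rw [Real.volume_Ioo, sub_zero, ENNReal.ofReal_toReal hrT]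
    exact le_trans (le_min hmeas1 hmeas2) hfin
  have hJtop : J ≠ ∞ := ne_top_of_le_ne_top hItop hJle
  have hMbound : ∀ x, maximalFn μ f x ≤
      (⨆ (c : X) (r : ℝ) (_ : x ∈ ball c r),
        (μ (ball c r))⁻¹ * ∫⁻ y in ball c r, h1 y ∂μ) + lam := by
    intro x
    refine iSup_le fun c => iSup_le fun r => iSup_le fun hx => ?_
    have hsplit : ∫⁻ y in ball c r, (‖f y‖₊ : ℝ≥0∞) ∂μ =
        (∫⁻ y in ball c r, h1 y ∂μ) +
          ∫⁻ y in ball c r, (if lam < g y then 0 else g y) ∂μ := by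
      rw [← lintegral_add_left hh1m]
      refine lintegral_congr fun y => ?_
      by_cases hy : lam < g y <;> simp only [hg] at hy <;> simp [hh1, hg, hy]
    have h2bound : ∫⁻ y in ball c r, (if lam < g y then 0 else g y) ∂μ ≤ lam * μ (ball c r) := by
      calc ∫⁻ y in ball c r, (if lam < g y then 0 else g y) ∂μ
          ≤ ∫⁻ _ in ball c r, lam ∂μ := by
            refine lintegral_mono fun y => ?_
            by_cases hy : lam < g y
            · simp [hy]
            · simpa [hy] using le_of_not_gt hy
        _ = lam * μ (ball c r) := setLIntegral_const _ _
    have hsecond : (μ (ball c r))⁻¹ * ∫⁻ y in ball c r, (if lam < g y then 0 else g y) ∂μ ≤ lam := by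
      rcases eq_or_ne (μ (ball c r)) 0 with hB0 | hB0
      · have hz : ∫⁻ y in ball c r, (if lam < g y then 0 else g y) ∂μ = 0 := by
          rw [Measure.restrict_eq_zero.mpr hB0, lintegral_zero_measure]
        simp [hz]
      rcases eq_or_ne (μ (ball c r)) ∞ with hBt | hBt
      · simp [hBt]
      · refine le_trans (mul_le_mul_right h2bound _) ?_
        rw [mul_comm lam, ← mul_assoc, ENNReal.inv_mul_cancel hB0 hBt, one_mul]
    calc (μ (ball c r))⁻¹ * ∫⁻ y in ball c r, (‖f y‖₊ : ℝ≥0∞) ∂μ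
        = (μ (ball c r))⁻¹ * ∫⁻ y in ball c r, h1 y ∂μ +
          (μ (ball c r))⁻¹ * ∫⁻ y in ball c r, (if lam < g y then 0 else g y) ∂μ := by
          rw [hsplit, mul_add]
      _ ≤ (μ (ball c r))⁻¹ * ∫⁻ y in ball c r, h1 y ∂μ + lam := add_le_add_right hsecond _
      _ ≤ (⨆ (c : X) (r : ℝ) (_ : x ∈ ball c r),
            (μ (ball c r))⁻¹ * ∫⁻ y in ball c r, h1 y ∂μ) + lam := by
          refine add_le_add_left ?_ lam
          exact le_iSup_of_le c (le_iSup_of_le r (le_iSup_of_le hx le_rfl))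
  rcases eq_or_ne J 0 with hJ0 | hJ0
  · have hM0' : ∀ x, maximalFn μ f x ≤ lam := by
      intro x
      refine le_trans (hMbound x) ?_
      have hz : (⨆ (c : X) (r : ℝ) (_ : x ∈ ball c r),
          (μ (ball c r))⁻¹ * ∫⁻ y in ball c r, h1 y ∂μ) = 0 := by
        refine le_antisymm (iSup_le fun c => iSup_le fun r => iSup_le fun hx => ?_) zero_le
        have hz2 : ∫⁻ y in ball c r, h1 y ∂μ = 0 :=
          le_antisymm (le_trans (lintegral_mono' Measure.restrict_le_self le_rfl) hJ0.le)
            zero_le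
        simp [hz2]
      rw [hz, zero_add]
    have hre : rearrE μ (maximalFn μ f) t ≤ lam := by
      refine rearrE_le ?_
      have he : {x | lam < maximalFn μ f x} = ∅ :=
        Set.eq_empty_iff_forall_notMem.mpr fun x hx => absurd (hM0' x) (not_le.mpr hx)
      simp [he]
    refine le_trans hre (le_trans hlamle ?_)
    rw [hCid]
    calc I * T⁻¹ = 1 * T⁻¹ * I := by ring
      _ ≤ (1 + 2 * K) * T⁻¹ * I := by
          refine mul_le_mul_left (mul_le_mul_left ?_ _) _
          exact le_self_add
  · set lvl := 2 * K * J * T⁻¹ with hlvl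
    have hlvl0 : lvl ≠ 0 :=
      mul_ne_zero (mul_ne_zero (mul_ne_zero two_ne_zero hK0) hJ0)
        (ENNReal.inv_ne_zero.mpr hTtop)
    have hlvltop : lvl ≠ ∞ :=
      ENNReal.mul_ne_top
        (ENNReal.mul_ne_top (ENNReal.mul_ne_top ENNReal.ofNat_ne_top hKtop) hJtop)
        (ENNReal.inv_ne_top.mpr hT0)
    have hweak := weak11 μ K hdoub8 h1 hh1m hJtop hlvl0 hlvltop
    have hKT : K * lvl⁻¹ * J ≤ T := by
      have hKJ0 : K * J ≠ 0 := mul_ne_zero hK0 hJ0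
      have hKJt : K * J ≠ ∞ := ENNReal.mul_ne_top hKtop hJtop
      have hinv : lvl⁻¹ = (2 * K * J)⁻¹ * T := by
        rw [hlvl, ENNReal.mul_inv (Or.inl (mul_ne_zero (mul_ne_zero two_ne_zero hK0) hJ0))
          (Or.inr (ENNReal.inv_ne_zero.mpr hTtop)), inv_inv]
      have hinv2 : (2 * K * J)⁻¹ = 2⁻¹ * (K * J)⁻¹ := by
        rw [mul_assoc, ENNReal.mul_inv (Or.inl two_ne_zero) (Or.inl ENNReal.ofNat_ne_top)]
      calc K * lvl⁻¹ * J = (K * J) * (2 * K * J)⁻¹ * T := by rw [hinv]; ring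
        _ = 2⁻¹ * ((K * J) * (K * J)⁻¹) * T := by rw [hinv2]; ring
        _ = 2⁻¹ * T := by rw [ENNReal.mul_inv_cancel hKJ0 hKJt, mul_one]
        _ ≤ T := by
            refine le_trans (mul_le_mul_left ?_ T) (le_of_eq (one_mul T))
            exact ENNReal.inv_le_one.mpr one_le_two
    have hfinal : rearrE μ (maximalFn μ f) t ≤ lvl + lam := by
      refine rearrE_le ?_
      refine le_trans (measure_mono ?_) (le_trans hweak hKT)
      intro x hx
      simp only [Set.mem_setOf_eq] at hx ⊢
      have hlt := lt_of_lt_of_le hx (hMbound x)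
      exact (ENNReal.add_lt_add_iff_right hlamtop).mp hlt
    refine le_trans hfinal ?_
    rw [hCid]
    have h1' : lvl ≤ 2 * K * T⁻¹ * I := by
      rw [hlvl]
      calc 2 * K * J * T⁻¹ ≤ 2 * K * I * T⁻¹ := by gcongr
        _ = 2 * K * T⁻¹ * I := by ring
    have h2' : lam ≤ 1 * T⁻¹ * I := by
      rw [one_mul]
      exact le_trans hlamle (le_of_eq (mul_comm I T⁻¹))
    calc lvl + lam ≤ 2 * K * T⁻¹ * I + 1 * T⁻¹ * I := add_le_add h1' h2'
      _ = (1 + 2 * K) * T⁻¹ * I := by ring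
end
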